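/- Let T be a well-pruned tree of sequences and ξ an inductive probability measure on T. Then for every natural number n such that Lv_n(T) ≠ ∅, one has ∑' over t ∈ Lv_n(T) of ξ(t) = 1. -/

import Mathlib

open scoped ENNReal
open MeasureTheory

noncomputable section

/-- A tree of sequences: a nonempty set of finite lists of naturals closed under prefixes. -/
def IsTree (T : Set (List ℕ)) : Prop :=
  T.Nonempty ∧ ∀ s t : List ℕ, s <+: t → t ∈ T → s ∈ T

/-- `t` is a maximal node of `T`: it has no successor in `T`. -/
def IsMaxNode (T : Set (List ℕ)) (t : List ℕ) : Prop :=
  ∀ k : ℕ, t ++ [k] ∉ T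

/-- A probability tree on `T`. -/
def IsProbTree (T : Set (List ℕ)) (p : List ℕ → ℕ → ℝ≥0∞) : Prop :=
  ∀ t ∈ T, ¬ IsMaxNode T t →
    (∀ k : ℕ, t ++ [k] ∉ T → p t k = 0) ∧ (∑' k : ℕ, p t k = 1)

/-- The measure induced by a probability tree: `Ξ_p(t) = ∏_{i<|t|} p (t↾i) (t i)`. -/
def Xi (p : List ℕ → ℕ → ℝ≥0∞) (t : List ℕ) : ℝ≥0∞ :=
  ∏ i ∈ Finset.range t.length, p (t.take i) (t.getD i 0)

/-- An inductive probability measure on `T`. -/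
def IsIPM (T : Set (List ℕ)) (ξ : List ℕ → ℝ≥0∞) : Prop :=
  ξ [] = 1 ∧ ∀ t ∈ T, ¬ IsMaxNode T t →
    ξ t = ∑' k : {k : ℕ // t ++ [k] ∈ T}, ξ (t ++ [k.1])

/-- The set of infinite branches of `T`. -/
def limT (T : Set (List ℕ)) : Set (ℕ → ℕ) :=
  {x | ∀ n : ℕ, (List.range n).map x ∈ T}

/-- `T` is pruned: every node has a successor in `T`. -/
def Pruned (T : Set (List ℕ)) : Prop := ∀ t ∈ T, ∃ k : ℕ, t ++ [k] ∈ T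

/-- The basic clopen set `[t]` of branches through `t`. -/
def cyl (T : Set (List ℕ)) (t : List ℕ) : Set ↥(limT T) :=
  {x | (List.range t.length).map x.1 = t}

/-- `T` is well-pruned: every node extends to any nonempty level above it. -/
def WellPruned (T : Set (List ℕ)) : Prop :=
  ∀ t ∈ T, ∀ n : ℕ, t.length < n → (∃ s ∈ T, s.length = n) →
    ∃ t' ∈ T, t'.length = n ∧ t <+: t'

lemma key_ext (s : List ℕ) (n : ℕ) (h : s.length = n + 1) :
    s = s.take n ++ [s.getD n 0] := by
  have hn : n < s.length := by omega
  conv_lhs => rw [← List.take_length (l := s), h]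
  rw [← List.take_concat_get hn, List.concat_eq_append]
  congr 2
  simp [List.getD_eq_getElem?_getD, List.getElem?_eq_getElem hn]

theorem stmt1 (T : Set (List ℕ)) (ξ : List ℕ → ℝ≥0∞)
    (hT : IsTree T) (hwp : WellPruned T) (hξ : IsIPM T ξ) :
    ∀ n : ℕ, (∃ t ∈ T, t.length = n) →
      ∑' t : {t : List ℕ // t ∈ T ∧ t.length = n}, ξ t.1 = 1 := by
  intro n
  induction n with
  | zero =>
    rintro ⟨t, ht, -⟩
    have h0 : ([] : List ℕ) ∈ T := hT.2 [] t (List.nil_prefix) ht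
    have huniq : ∀ b : {t : List ℕ // t ∈ T ∧ t.length = 0}, b = ⟨[], h0, rfl⟩ := by
      rintro ⟨b, hb, hbl⟩
      simp [List.length_eq_zero_iff.mp hbl]
    rw [tsum_eq_single (⟨[], h0, rfl⟩ : {t : List ℕ // t ∈ T ∧ t.length = 0})
      (fun b hb => absurd (huniq b) hb)]
    exact hξ.1
  | succ n ih =>
    rintro ⟨s, hs, hsl⟩
    have htn : s.take n ∈ T ∧ (s.take n).length = n := by
      refine ⟨hT.2 _ s (List.take_prefix n s) hs, ?_⟩
      simp [hsl]
    have hnonmax : ∀ t : {t : List ℕ // t ∈ T ∧ t.length = n}, ¬ IsMaxNode T t.1 := by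
      rintro ⟨t, ht, htl⟩ hmax
      obtain ⟨t', ht', ht'l, htp⟩ := hwp t ht (n + 1) (by omega) ⟨s, hs, hsl⟩
      have h1 : t'.take n = t := by
        have := List.prefix_iff_eq_take.mp htp
        rw [htl] at this
        exact this.symm
      have h2 : t ++ [t'.getD n 0] ∈ T := by
        rw [← h1, ← key_ext t' n ht'l]
        exact ht'
      exact hmax _ h2
    have hsum : ∀ t : {t : List ℕ // t ∈ T ∧ t.length = n},
        ξ t.1 = ∑' k : {k : ℕ // t.1 ++ [k] ∈ T}, ξ (t.1 ++ [k.1]) :=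
      fun t => hξ.2 t.1 t.2.1 (hnonmax t)
    set f : (Σ t : {t : List ℕ // t ∈ T ∧ t.length = n}, {k : ℕ // t.1 ++ [k] ∈ T}) →
        {t : List ℕ // t ∈ T ∧ t.length = n + 1} :=
      fun σ => ⟨σ.1.1 ++ [σ.2.1], σ.2.2, by simp [σ.1.2.2]⟩ with hf
    have hbij : Function.Bijective f := by
      constructor
      · rintro ⟨⟨t, ht⟩, ⟨k, hk⟩⟩ ⟨⟨t', ht'⟩, ⟨k', hk'⟩⟩ h
        have h' : t ++ [k] = t' ++ [k'] := congrArg Subtype.val h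
        obtain ⟨h1, h2⟩ := List.append_inj h' (by rw [ht.2, ht'.2])
        have h3 : k = k' := by simpa using h2
        subst h1; subst h3; rfl
      · rintro ⟨s', hs', hs'l⟩
        refine ⟨⟨⟨s'.take n, hT.2 _ s' (List.take_prefix n s') hs', by simp [hs'l]⟩,
          ⟨s'.getD n 0, ?_⟩⟩, ?_⟩
        · rw [← key_ext s' n hs'l]; exact hs'
        · exact Subtype.ext (key_ext s' n hs'l).symm
    calc ∑' t : {t : List ℕ // t ∈ T ∧ t.length = n + 1}, ξ t.1
        = ∑' σ : (Σ t : {t : List ℕ // t ∈ T ∧ t.length = n}, {k : ℕ // t.1 ++ [k] ∈ T}),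
            ξ (f σ).1 := ((Equiv.ofBijective f hbij).tsum_eq (fun t => ξ t.1)).symm
      _ = ∑' t : {t : List ℕ // t ∈ T ∧ t.length = n},
            ∑' k : {k : ℕ // t.1 ++ [k] ∈ T}, ξ (t.1 ++ [k.1]) := ENNReal.tsum_sigma' _
      _ = ∑' t : {t : List ℕ // t ∈ T ∧ t.length = n}, ξ t.1 := by
            exact tsum_congr fun t => (hsum t).symm
      _ = 1 := ih ⟨s.take n, htn⟩
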